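/- Define the function W(x,y) = x·(x²y - (x-y)³) + 8y³·(-y + (x+y)²), which is the derivative of V(x,y) = x²/2 + 2y⁴ along the flow of the system ẋ = x²y - (x-y)³, ẏ = -y + (x+y)². Then: (i) the fourth-order homogeneous part of W, namely the quartic form -x⁴ + 4x³y - 3x²y² + xy³ - 8y⁴, is strictly negative for every (x,y) ≠ (0,0); (ii) consequently there exists δ > 0 such that W(x,y) < 0 for all (x,y) with 0 < x² + y² < δ². Hence V is a strict Lyapunov function and the origin is an asymptotically stable equilibrium of the system ẋ = x²y - (x-y)³, ẏ = -y + (x+y)² in the case γ = 1. -/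

import Mathlib

open Filter

/-- The derivative of the Lyapunov candidate `V(x,y) = x²/2 + 2y⁴` along the flow of
`ẋ = x²y - (x-y)³, ẏ = -y + (x+y)²` (the case `γ = 1`). -/
noncomputable def W10 (x y : ℝ) : ℝ :=
  x * (x ^ 2 * y - (x - y) ^ 3) + 8 * y ^ 3 * (-y + (x + y) ^ 2)

/-- The planar vector field `ẋ = x²y - (x-y)³, ẏ = -y + (x+y)²` (the case `γ = 1`). -/
noncomputable def F10 (p : ℝ × ℝ) : ℝ × ℝ :=
  (p.1 ^ 2 * p.2 - (p.1 - p.2) ^ 3, -p.2 + (p.1 + p.2) ^ 2)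

lemma quartic_pos (x y : ℝ) :
    x^4 - 4*x^3*y + 3*x^2*y^2 - x*y^3 + 8*y^4 ≥ (x^2+y^2)^2/100 := by
  nlinarith [sq_nonneg (x^2-2*x*y-y^2), sq_nonneg (x*y-5/2*y^2), sq_nonneg (y^2),
    sq_nonneg (x*y), sq_nonneg (x^2), sq_nonneg (x^2-2*x*y), sq_nonneg (x^2+y^2)]

lemma W_bound (x y : ℝ) (hy : |y| ≤ 1/2000) : W10 x y ≤ -((x^2+y^2)^2/500) := by
  have h1 : y^3*(x+y)^2 ≤ |y| * (y^2*(x+y)^2) := by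
    calc y^3*(x+y)^2 = y * (y^2*(x+y)^2) := by ring
      _ ≤ |y| * (y^2*(x+y)^2) := mul_le_mul_of_nonneg_right (le_abs_self y) (by positivity)
  have h2 : y^2*(x+y)^2 ≤ 2*(x^2+y^2)^2 := by nlinarith [sq_nonneg (x-y), sq_nonneg (x+y), sq_nonneg (x*y)]
  have h3 : |y| * (y^2*(x+y)^2) ≤ (1/2000) * (2*(x^2+y^2)^2) :=
    mul_le_mul hy h2 (by positivity) (by norm_num)
  have hQ := quartic_pos x y
  simp only [W10]
  nlinarith [h1, h3, hQ]

lemma W_nonpos (x y : ℝ) (hy : |y| ≤ 1/2000) : W10 x y ≤ 0 :=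
  (W_bound x y hy).trans (neg_nonpos.mpr (by positivity))

/-- composed Lyapunov derivative -/
lemma hasDerivAt_V (f : ℝ → ℝ × ℝ) (t : ℝ) (hf : HasDerivAt f (F10 (f t)) t) :
    HasDerivAt (fun s => (f s).1 ^ 2 / 2 + 2 * (f s).2 ^ 4) (W10 (f t).1 (f t).2) t := by
  have h1 : HasDerivAt (fun s => (f s).1) (F10 (f t)).1 t :=
    (ContinuousLinearMap.hasFDerivAt (ContinuousLinearMap.fst ℝ ℝ ℝ)).comp_hasDerivAt t hf
  have h2 : HasDerivAt (fun s => (f s).2) (F10 (f t)).2 t :=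
    (ContinuousLinearMap.hasFDerivAt (ContinuousLinearMap.snd ℝ ℝ ℝ)).comp_hasDerivAt t hf
  have h : HasDerivAt (fun s => (f s).1 ^ 2 / 2 + 2 * (f s).2 ^ 4) _ t :=
    (((h1.pow 2).div_const 2).add ((h2.pow 4).const_mul 2))
  convert h using 1
  simp only [W10, F10]
  push_cast
  ring

lemma abs_fst_le (p : ℝ × ℝ) : |p.1| ≤ ‖p‖ := by
  rw [Prod.norm_def]; exact le_max_of_le_left (by simp [Real.norm_eq_abs])

lemma abs_snd_le (p : ℝ × ℝ) : |p.2| ≤ ‖p‖ := by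
  rw [Prod.norm_def]; exact le_max_of_le_right (by simp [Real.norm_eq_abs])

lemma stay (f : ℝ → ℝ × ℝ) (hf : ∀ t : ℝ, 0 ≤ t → HasDerivAt f (F10 (f t)) t)
    (r : ℝ) (hr0 : 0 < r) (hr : r ≤ 1/2000) (h0 : ‖f 0‖ < r ^ 3) :
    ∀ t : ℝ, 0 ≤ t → ‖f t‖ < r := by
  set V : ℝ → ℝ := fun s => (f s).1 ^ 2 / 2 + 2 * (f s).2 ^ 4 with hV
  -- V (f 0) < 2 r^4
  have hx0 : |(f 0).1| < r ^ 3 := lt_of_le_of_lt (abs_fst_le _) h0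
  have hy0 : |(f 0).2| < r ^ 3 := lt_of_le_of_lt (abs_snd_le _) h0
  have hV0 : V 0 < 2 * r ^ 4 := by
    have hx2 : (f 0).1 ^ 2 < r ^ 6 := by nlinarith [sq_abs (f 0).1, abs_nonneg (f 0).1]
    have hy2 : (f 0).2 ^ 2 < r ^ 6 := by nlinarith [sq_abs (f 0).2, abs_nonneg (f 0).2]
    have hy4 : (f 0).2 ^ 4 < r ^ 12 := by nlinarith [sq_nonneg (f 0).2]
    have hrr : r^2 ≤ (1/2000:ℝ)^2 := by nlinarith
    have h6 : r^6 ≤ r^4 * (1/2000:ℝ)^2 := by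
      calc r^6 = r^4 * r^2 := by ring
        _ ≤ r^4 * (1/2000:ℝ)^2 := mul_le_mul_of_nonneg_left hrr (by positivity)
    have h12 : r^12 ≤ r^6 := by
      calc r^12 = r^6 * (r^2)^3 := by ring
        _ ≤ r^6 * 1 := by
            refine mul_le_mul_of_nonneg_left ?_ (by positivity)
            have : r^2 ≤ 1 := by nlinarith
            nlinarith [sq_nonneg r, sq_nonneg (r^2)]
        _ = r^6 := by ring
    have : r ^ 6 / 2 + 2 * r ^ 12 < 2 * r ^ 4 := by nlinarith [pow_pos hr0 4]
    simp only [hV]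
    nlinarith
  intro t ht
  by_contra hcon
  push_neg at hcon
  set S : Set ℝ := {s : ℝ | 0 ≤ s ∧ r ≤ ‖f s‖} with hS
  have hSne : S.Nonempty := ⟨t, ht, hcon⟩
  have hSbdd : BddBelow S := ⟨0, fun s hs => hs.1⟩
  set T : ℝ := sInf S with hT
  have hT0 : 0 ≤ T := le_csInf hSne fun s hs => hs.1
  -- r ≤ ‖f T‖ via closure
  have hfc : ContinuousAt (fun s => ‖f s‖) T := ((hf T hT0).continuousAt).norm
  have hrT : r ≤ ‖f T‖ := by
    have hcl : T ∈ closure S := csInf_mem_closure hSne hSbdd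
    rcases mem_closure_iff_seq_limit.mp hcl with ⟨u, hu, hul⟩
    exact le_of_tendsto_of_tendsto tendsto_const_nhds (hfc.tendsto.comp hul)
      (Eventually.of_forall fun n => (hu n).2)
  have hTpos : 0 < T := by
    rcases lt_or_eq_of_le hT0 with h | h
    · exact h
    · exfalso
      have h1 : r ≤ ‖f 0‖ := by rw [h]; exact hrT
      have hrr : r^2 ≤ (1/2000:ℝ)^2 := by nlinarith
      have h2 : r ^ 3 < r := by nlinarith [mul_le_mul_of_nonneg_left hrr hr0.le]
      linarith
  -- for s in [0, T), ‖f s‖ < r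
  have hlt : ∀ s, 0 ≤ s → s < T → ‖f s‖ < r := by
    intro s hs hsT
    by_contra hge
    push_neg at hge
    exact absurd (csInf_le hSbdd ⟨hs, hge⟩) (not_le.mpr hsT)
  -- ‖f T‖ ≤ r
  have hleT : ‖f T‖ ≤ r := by
    have htend : Tendsto (fun s => ‖f s‖) (nhdsWithin T (Set.Iio T)) (nhds ‖f T‖) :=
      hfc.tendsto.mono_left nhdsWithin_le_nhds
    refine le_of_tendsto htend ?_
    filter_upwards [Ioo_mem_nhdsLT hTpos] with s hs
    exact (hlt s hs.1.le hs.2).le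
  have hSnorm : ‖f T‖ = r := le_antisymm hleT hrT
  -- V antitone on [0, T]
  have hanti : AntitoneOn V (Set.Icc 0 T) := by
    apply antitoneOn_of_deriv_nonpos (convex_Icc 0 T)
    · intro s hs
      exact ((hasDerivAt_V f s (hf s hs.1)).continuousAt).continuousWithinAt
    · intro s hs
      rw [interior_Icc] at hs
      exact ((hasDerivAt_V f s (hf s hs.1.le)).differentiableAt).differentiableWithinAt
    · intro s hs
      rw [interior_Icc] at hs
      rw [(hasDerivAt_V f s (hf s hs.1.le)).deriv]
      apply W_nonpos
      have := (hlt s hs.1.le hs.2).le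
      linarith [abs_snd_le (f s), this]
  have hmono := hanti (Set.left_mem_Icc.mpr hT0) (Set.right_mem_Icc.mpr hT0) hT0
  -- V (f T) ≥ 2 r^4
  have hVT : 2 * r ^ 4 ≤ V T := by
    have hxr : |(f T).1| ≤ r := hSnorm ▸ abs_fst_le (f T)
    have hyr : |(f T).2| ≤ r := hSnorm ▸ abs_snd_le (f T)
    have : |(f T).1| = r ∨ |(f T).2| = r := by
      rcases max_choice ‖(f T).1‖ ‖(f T).2‖ with h | h <;>
        [left; right] <;>
        · rw [← Real.norm_eq_abs, ← h, ← Prod.norm_def, hSnorm]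
    rcases this with h | h
    · have : (f T).1 ^ 2 = r ^ 2 := by rw [← sq_abs, h]
      simp only [hV]
      have hr2 : r^2 ≤ (1/2000:ℝ)^2 := by nlinarith
      have h4 : r^4 ≤ r^2/4 := by nlinarith [hr2, sq_nonneg r]
      linarith [sq_nonneg ((f T).2 ^ 2), this, h4]
    · have : (f T).2 ^ 4 = r ^ 4 := by
        rw [show (4:ℕ) = 2*2 by norm_num, pow_mul, pow_mul, ← sq_abs (f T).2, h]
      simp only [hV]
      linarith [sq_nonneg (f T).1, this]
  simp only [hV] at hmono hVT hV0
  linarith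

lemma asymp (f : ℝ → ℝ × ℝ) (hf : ∀ t : ℝ, 0 ≤ t → HasDerivAt f (F10 (f t)) t)
    (h0 : ‖f 0‖ < (1/2000 : ℝ) ^ 3) : Tendsto f atTop (nhds 0) := by
  have hstay : ∀ t : ℝ, 0 ≤ t → ‖f t‖ < 1/2000 := stay f hf (1/2000) (by norm_num) le_rfl h0
  set V : ℝ → ℝ := fun s => (f s).1 ^ 2 / 2 + 2 * (f s).2 ^ 4 with hV
  have hVnonneg : ∀ s : ℝ, 0 ≤ V s := fun s => by positivity
  have hderiv : ∀ s : ℝ, 0 ≤ s → HasDerivAt V (W10 (f s).1 (f s).2) s :=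
    fun s hs => hasDerivAt_V f s (hf s hs)
  have hyb : ∀ s : ℝ, 0 ≤ s → |(f s).2| ≤ 1/2000 :=
    fun s hs => le_trans (abs_snd_le _) (hstay s hs).le
  have hanti : AntitoneOn V (Set.Ici 0) := by
    apply antitoneOn_of_deriv_nonpos (convex_Ici 0)
    · exact fun s hs => ((hderiv s hs).continuousAt).continuousWithinAt
    · intro s hs; rw [interior_Ici] at hs
      exact ((hderiv s hs.le).differentiableAt).differentiableWithinAt
    · intro s hs; rw [interior_Ici] at hs
      rw [(hderiv s hs.le).deriv]
      exact W_nonpos _ _ (hyb s hs.le)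
  rw [Metric.tendsto_atTop]
  intro ε hε
  set η : ℝ := min (ε^2/2) (2*ε^4) with hη
  have hη0 : 0 < η := lt_min (by positivity) (by positivity)
  have key : ∃ T : ℝ, 0 ≤ T ∧ V T < η := by
    by_contra hbig
    push_neg at hbig
    have hlow : ∀ t : ℝ, 0 ≤ t → η ≤ ‖f t‖^2 := by
      intro t ht
      have h1 := hbig t ht
      have hx := abs_fst_le (f t); have hy := abs_snd_le (f t)
      have hn0 : (0:ℝ) ≤ ‖f t‖ := norm_nonneg _
      have hnr : ‖f t‖ ≤ 1/2000 := (hstay t ht).le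
      have hx2 : (f t).1^2 ≤ ‖f t‖^2 := by nlinarith [abs_nonneg (f t).1, sq_abs (f t).1]
      have hy2 : (f t).2^2 ≤ ‖f t‖^2 := by nlinarith [abs_nonneg (f t).2, sq_abs (f t).2]
      have hy4 : (f t).2^4 ≤ ‖f t‖^4 := by nlinarith [sq_nonneg (f t).2, sq_nonneg ‖f t‖]
      have hsq : ‖f t‖^2 ≤ (1/2000:ℝ)^2 := by nlinarith
      have h4 : ‖f t‖^4 ≤ ‖f t‖^2/4 := by nlinarith [hsq, sq_nonneg ‖f t‖]
      simp only [hV] at h1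
      linarith
    set K : Set (ℝ×ℝ) := {p | η ≤ ‖p‖^2 ∧ ‖p‖ ≤ 1/2000} with hK
    have hKc : IsCompact K := by
      apply (isCompact_closedBall (0:ℝ×ℝ) (1/2000)).of_isClosed_subset
      · exact IsClosed.inter (isClosed_le continuous_const (continuous_norm.pow 2))
          (isClosed_le continuous_norm continuous_const)
      · intro p hp
        simpa [Metric.mem_closedBall, dist_zero_right] using hp.2
    have hKne : K.Nonempty := ⟨f 0, hlow 0 le_rfl, (hstay 0 le_rfl).le⟩
    have hWc : Continuous fun p : ℝ×ℝ => W10 p.1 p.2 := by unfold W10; fun_prop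
    obtain ⟨p₀, hp₀K, hmax⟩ := hKc.exists_isMaxOn hKne hWc.continuousOn
    set k : ℝ := -(W10 p₀.1 p₀.2) with hk
    have hk0 : 0 < k := by
      have hb := W_bound p₀.1 p₀.2 (le_trans (abs_snd_le _) hp₀K.2)
      have hss : ‖p₀‖^2 ≤ p₀.1^2 + p₀.2^2 := by
        rw [Prod.norm_def]
        rcases max_choice ‖p₀.1‖ ‖p₀.2‖ with h | h <;> rw [h] <;>
          simp only [Real.norm_eq_abs, sq_abs] <;>
          nlinarith [sq_nonneg p₀.1, sq_nonneg p₀.2]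
      have hs : 0 < p₀.1^2 + p₀.2^2 := lt_of_lt_of_le (lt_of_lt_of_le hη0 hp₀K.1) hss
      simp only [hk]
      nlinarith [pow_pos hs 2]
    have hanti2 : AntitoneOn (fun s => V s + k * s) (Set.Ici 0) := by
      apply antitoneOn_of_deriv_nonpos (convex_Ici 0)
      · exact fun s hs =>
          (((hderiv s hs).add ((hasDerivAt_id' s).const_mul k)).continuousAt).continuousWithinAt
      · intro s hs; rw [interior_Ici] at hs
        exact (((hderiv s hs.le).add
          ((hasDerivAt_id' s).const_mul k)).differentiableAt).differentiableWithinAt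
      · intro s hs; rw [interior_Ici] at hs
        rw [HasDerivAt.deriv (f := fun s => V s + k * s)
          ((hderiv s hs.le).add ((hasDerivAt_id' s).const_mul k))]
        have hfK : f s ∈ K := ⟨hlow s hs.le, (hstay s hs.le).le⟩
        have hm := hmax hfK
        simp only [Set.mem_setOf_eq] at hm
        simp only [hk, mul_one]
        linarith
    set T : ℝ := (V 0 + η)/k with hT
    have hT0 : 0 ≤ T := div_nonneg (by linarith [hVnonneg 0]) hk0.le
    have hm2 := hanti2 (Set.mem_Ici.mpr le_rfl) (Set.mem_Ici.mpr hT0) hT0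
    have hVT : η ≤ V T := hbig T hT0
    have hkT : k*T = V 0 + η := by
      rw [hT]; field_simp
    have hm2' : V T + k*T ≤ V 0 + k*0 := hm2
    have : k*0 = 0 := by ring
    linarith
  obtain ⟨T, hT0, hTV⟩ := key
  refine ⟨T, fun t ht => ?_⟩
  have ht0 : (0:ℝ) ≤ t := le_trans hT0 ht
  have hVt : V t ≤ V T := hanti (Set.mem_Ici.mpr hT0) (Set.mem_Ici.mpr ht0) ht
  have hVη : V t < η := lt_of_le_of_lt hVt hTV
  have hη1 : η ≤ ε^2/2 := min_le_left _ _
  have hη2 : η ≤ 2*ε^4 := min_le_right _ _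
  simp only [hV] at hVη
  have hx : |(f t).1| < ε := by
    nlinarith [sq_abs (f t).1, abs_nonneg (f t).1, sq_nonneg ((f t).2^2), hε]
  have hy : |(f t).2| < ε := by
    have hy4 : (f t).2^4 < ε^4 := by nlinarith [sq_nonneg (f t).1]
    by_contra hcy
    push_neg at hcy
    have h1 : ε^4 ≤ |(f t).2|^4 := pow_le_pow_left₀ hε.le hcy 4
    rw [pow_abs, abs_of_nonneg (by positivity : (0:ℝ) ≤ (f t).2^4)] at h1
    linarith
  rw [dist_zero_right, Prod.norm_def]
  exact max_lt (by simpa [Real.norm_eq_abs] using hx) (by simpa [Real.norm_eq_abs] using hy)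

/-- Lyapunov stability of the origin for `ẋ = x²y - (x-y)³, ẏ = -y + (x+y)²` with `γ = 1`:
`W` is the derivative of `V = x²/2 + 2y⁴` along the flow; its quartic homogeneous part is
negative definite; hence `W < 0` on a punctured neighbourhood of the origin, `V` is a strict
Lyapunov function, and the origin is asymptotically stable. -/
theorem lyapunov_origin_asymptotically_stable :
    (∀ x y : ℝ, W10 x y =
        deriv (fun s => s ^ 2 / 2 + 2 * y ^ 4) x * (x ^ 2 * y - (x - y) ^ 3)
          + deriv (fun s => x ^ 2 / 2 + 2 * s ^ 4) y * (-y + (x + y) ^ 2)) ∧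
    (∀ x y : ℝ, (x, y) ≠ ((0 : ℝ), (0 : ℝ)) →
      -x ^ 4 + 4 * x ^ 3 * y - 3 * x ^ 2 * y ^ 2 + x * y ^ 3 - 8 * y ^ 4 < 0) ∧
    (∃ δ > (0 : ℝ), ∀ x y : ℝ, 0 < x ^ 2 + y ^ 2 → x ^ 2 + y ^ 2 < δ ^ 2 → W10 x y < 0) ∧
    ((∀ ε > (0 : ℝ), ∃ δ > (0 : ℝ), ∀ f : ℝ → ℝ × ℝ,
        (∀ t : ℝ, 0 ≤ t → HasDerivAt f (F10 (f t)) t) → ‖f 0‖ < δ →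
          ∀ t : ℝ, 0 ≤ t → ‖f t‖ < ε) ∧
      (∃ δ > (0 : ℝ), ∀ f : ℝ → ℝ × ℝ,
        (∀ t : ℝ, 0 ≤ t → HasDerivAt f (F10 (f t)) t) → ‖f 0‖ < δ →
          Tendsto f atTop (nhds 0))) := by
  refine ⟨?_, ?_, ?_, ?_, ?_⟩
  · intro x y
    have d1 : deriv (fun s : ℝ => s ^ 2 / 2 + 2 * y ^ 4) x = x := by
      have h := ((hasDerivAt_pow 2 x).div_const 2).add_const (2 * y ^ 4)
      rw [h.deriv]; norm_num
    have d2 : deriv (fun s : ℝ => x ^ 2 / 2 + 2 * s ^ 4) y = 8 * y ^ 3 := by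
      have h := ((hasDerivAt_pow 4 y).const_mul 2).const_add (x ^ 2 / 2)
      rw [h.deriv]; push_cast; ring
    rw [d1, d2]; simp only [W10]
  · intro x y hxy
    have hs : 0 < x ^ 2 + y ^ 2 := by
      rcases eq_or_ne x 0 with hx | hx
      · rcases eq_or_ne y 0 with hy | hy
        · exact absurd (by rw [hx, hy]) hxy
        · have : 0 < y ^ 2 := by positivity
          nlinarith [sq_nonneg x]
      · have : 0 < x ^ 2 := by positivity
        nlinarith [sq_nonneg y]
    nlinarith [quartic_pos x y, pow_pos hs 2]
  · refine ⟨1/2000, by norm_num, fun x y hpos hlt => ?_⟩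
    have hy : |y| ≤ 1/2000 := by nlinarith [sq_abs y, abs_nonneg y, sq_nonneg x]
    have := W_bound x y hy
    nlinarith [pow_pos hpos 2]
  · intro ε hε
    refine ⟨(min ε (1/2000)) ^ 3, by positivity, fun f hfd hf0 t ht => ?_⟩
    exact lt_of_lt_of_le
      (stay f hfd (min ε (1/2000)) (lt_min hε (by norm_num)) (min_le_right _ _) hf0 t ht)
      (min_le_left _ _)
  · exact ⟨(1/2000 : ℝ) ^ 3, by norm_num, fun f hfd hf0 => asymp f hfd hf0⟩
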